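/- For a block diagonal Hermitian matrix A = diag{A_1,...,A_N} ∈ C^{NM×NM} with each A_k ∈ C^{M×M} Hermitian, the induced block maximum norm of A equals its spectral radius: ‖A‖_{b,∞} = ρ(A). -/
import Mathlib
open Matrix

open scoped Matrix.Norms.L2Operator in
noncomputable def matCStar {n : Type*} [Fintype n] [DecidableEq n] :
    CStarAlgebra (Matrix n n ℂ) where

/-- The block maximum norm of a block vector `x = col{x_1,...,x_N}` with `x_k ∈ ℂ^M`. -/
noncomputable def blockNorm (N M : ℕ) (x : Fin N × Fin M → ℂ) : ℝ :=
  ⨆ k : Fin N, Real.sqrt (∑ j : Fin M, ‖x (k, j)‖ ^ 2)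

section helpers
variable {N M : ℕ} (Ab : Fin N → Matrix (Fin M) (Fin M) ℂ)

def emb (k : Fin N) (v : Fin M → ℂ) : Fin N × Fin M → ℂ :=
  fun p => if p.1 = k then v p.2 else 0

def bdiag : Matrix (Fin N × Fin M) (Fin N × Fin M) ℂ :=
  Matrix.of fun p q => if p.1 = q.1 then Ab p.1 p.2 q.2 else 0

lemma mulVec_block (x : Fin N × Fin M → ℂ) (k : Fin N) (j : Fin M) :
    (bdiag Ab).mulVec x (k, j) = (Ab k).mulVec (fun i => x (k, i)) j := by
  simp only [Matrix.mulVec, dotProduct, Fintype.sum_prod_type, bdiag, Matrix.of_apply]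
  simp [Finset.sum_ite_eq, eq_comm]

lemma blockNorm_eq (x : Fin N × Fin M → ℂ) :
    blockNorm N M x = ⨆ k : Fin N,
      ‖((WithLp.equiv 2 _).symm (fun j => x (k, j)) : EuclideanSpace ℂ (Fin M))‖ := by
  simp [blockNorm, EuclideanSpace.norm_eq]

lemma blockNorm_emb (hN : 0 < N) (k : Fin N) (v : Fin M → ℂ) :
    blockNorm N M (emb k v) =
      ‖((WithLp.equiv 2 _).symm v : EuclideanSpace ℂ (Fin M))‖ := by
  haveI : Nonempty (Fin N) := Fin.pos_iff_nonempty.mp hN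
  rw [blockNorm_eq]
  have hfun : ∀ l : Fin N,
      ‖((WithLp.equiv 2 _).symm (fun j => emb k v (l, j)) : EuclideanSpace ℂ (Fin M))‖ =
        if l = k then ‖((WithLp.equiv 2 _).symm v : EuclideanSpace ℂ (Fin M))‖ else 0 := by
    intro l
    by_cases hl : l = k <;> simp [emb, hl, EuclideanSpace.norm_eq]
  simp only [hfun]
  apply le_antisymm
  · exact ciSup_le fun l => by by_cases hl : l = k <;> simp [hl]
  · have := le_ciSup (f := fun l : Fin N =>
      if l = k then ‖((WithLp.equiv 2 _).symm v : EuclideanSpace ℂ (Fin M))‖ else 0)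
      (Set.Finite.bddAbove (Set.finite_range _)) k
    simpa using this

lemma mulVec_emb (k : Fin N) (v : Fin M → ℂ) :
    (bdiag Ab).mulVec (emb k v) = emb k ((Ab k).mulVec v) := by
  funext p
  obtain ⟨l, j⟩ := p
  rw [mulVec_block]
  by_cases hl : l = k
  · subst hl; simp [emb]
  · have : (fun i => emb k v (l, i)) = (0 : Fin M → ℂ) := by funext i; simp [emb, hl]
    rw [show (fun i => emb k v (l, i)) = (0 : Fin M → ℂ) from this, Matrix.mulVec_zero]
    simp [emb, hl]

lemma norm_emb (k : Fin N) (v : Fin M → ℂ) :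
    ‖((WithLp.equiv 2 _).symm (emb k v) : EuclideanSpace ℂ (Fin N × Fin M))‖ =
      ‖((WithLp.equiv 2 _).symm v : EuclideanSpace ℂ (Fin M))‖ := by
  simp only [EuclideanSpace.norm_eq]
  congr 1
  simp only [Fintype.sum_prod_type]
  rw [Finset.sum_eq_single k]
  · simp [emb]
  · intro l _ hl; simp [emb, hl]
  · simp

end helpers

/-- The matrix norm induced by the block maximum norm. -/
noncomputable def inducedBlockNorm (N M : ℕ)
    (A : Matrix (Fin N × Fin M) (Fin N × Fin M) ℂ) : ℝ :=
  sSup {r : ℝ | ∃ x : Fin N × Fin M → ℂ, x ≠ 0 ∧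
    r = blockNorm N M (A.mulVec x) / blockNorm N M x}

section main
variable {N M : ℕ} (Ab : Fin N → Matrix (Fin M) (Fin M) ℂ)

lemma blockNorm_nonneg (x : Fin N × Fin M → ℂ) : 0 ≤ blockNorm N M x :=
  Real.iSup_nonneg fun _ => Real.sqrt_nonneg _

lemma blockNorm_pos {x : Fin N × Fin M → ℂ} (hx : x ≠ 0) : 0 < blockNorm N M x := by
  obtain ⟨p, hp⟩ := Function.ne_iff.mp hx
  have h1 : 0 < Real.sqrt (∑ j : Fin M, ‖x (p.1, j)‖ ^ 2) := by
    apply Real.sqrt_pos.mpr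
    apply Finset.sum_pos' (fun j _ => by positivity)
    exact ⟨p.2, Finset.mem_univ _, by simp; exact pow_pos (norm_pos_iff.mpr hp) 2⟩
  exact lt_of_lt_of_le h1 <|
    le_ciSup (f := fun k : Fin N => Real.sqrt (∑ j : Fin M, ‖x (k, j)‖ ^ 2))
      (Set.Finite.bddAbove (Set.finite_range _)) p.1

lemma norm_pos_of_ne {v : Fin M → ℂ} (hv : v ≠ 0) :
    0 < ‖((WithLp.equiv 2 _).symm v : EuclideanSpace ℂ (Fin M))‖ := by
  obtain ⟨i, hi⟩ := Function.ne_iff.mp hv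
  rw [EuclideanSpace.norm_eq]
  apply Real.sqrt_pos.mpr
  apply Finset.sum_pos' (fun j _ => by positivity)
  exact ⟨i, Finset.mem_univ _, by simp; exact pow_pos (norm_pos_iff.mpr hi) 2⟩

open scoped Matrix.Norms.L2Operator in
lemma key (hN : 0 < N) (hM : 0 < M) :
    inducedBlockNorm N M (bdiag Ab) = ‖bdiag Ab‖ := by
  haveI : Nonempty (Fin N) := Fin.pos_iff_nonempty.mp hN
  haveI : Nonempty (Fin M) := Fin.pos_iff_nonempty.mp hM
  set S := {r : ℝ | ∃ x : Fin N × Fin M → ℂ, x ≠ 0 ∧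
    r = blockNorm N M ((bdiag Ab).mulVec x) / blockNorm N M x} with hS
  -- upper bound
  have ub : ∀ r ∈ S, r ≤ ‖bdiag Ab‖ := by
    rintro r ⟨x, hx, rfl⟩
    rw [div_le_iff₀ (blockNorm_pos hx)]
    rw [blockNorm_eq]
    apply ciSup_le
    intro k
    have h1 : (fun j => (bdiag Ab).mulVec x (k, j)) =
        (Ab k).mulVec (fun i => x (k, i)) := funext fun j => mulVec_block Ab x k j
    rw [h1]
    calc ‖((WithLp.equiv 2 _).symm ((Ab k).mulVec fun i => x (k, i)) :
            EuclideanSpace ℂ (Fin M))‖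
        = ‖((WithLp.equiv 2 _).symm (emb k ((Ab k).mulVec fun i => x (k, i))) :
            EuclideanSpace ℂ (Fin N × Fin M))‖ := (norm_emb _ _).symm
      _ = ‖((WithLp.equiv 2 _).symm ((bdiag Ab).mulVec (emb k fun i => x (k, i))) :
            EuclideanSpace ℂ (Fin N × Fin M))‖ := by rw [mulVec_emb]
      _ ≤ ‖bdiag Ab‖ * ‖((WithLp.equiv 2 _).symm (emb k fun i => x (k, i)) :
            EuclideanSpace ℂ (Fin N × Fin M))‖ :=
          (bdiag Ab).l2_opNorm_mulVec ((WithLp.equiv 2 _).symm (emb k fun i => x (k, i)))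
      _ = ‖bdiag Ab‖ * ‖((WithLp.equiv 2 _).symm (fun i => x (k, i)) :
            EuclideanSpace ℂ (Fin M))‖ := by rw [norm_emb]
      _ ≤ ‖bdiag Ab‖ * blockNorm N M x := by
          apply mul_le_mul_of_nonneg_left _ (norm_nonneg _)
          rw [blockNorm_eq]
          exact le_ciSup (f := fun k : Fin N =>
            ‖((WithLp.equiv 2 _).symm (fun j => x (k, j)) : EuclideanSpace ℂ (Fin M))‖)
            (Set.Finite.bddAbove (Set.finite_range _)) k
  -- nonempty
  have hx0 : (fun _ : Fin N × Fin M => (1 : ℂ)) ≠ 0 := by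
    intro h
    exact one_ne_zero (congrFun h (Classical.arbitrary _))
  have hr0 : blockNorm N M ((bdiag Ab).mulVec fun _ => 1) / blockNorm N M (fun _ => 1) ∈ S :=
    ⟨_, hx0, rfl⟩
  have hne : S.Nonempty := ⟨_, hr0⟩
  have hbdd : BddAbove S := ⟨‖bdiag Ab‖, ub⟩
  have hc0 : 0 ≤ sSup S :=
    le_trans (div_nonneg (blockNorm_nonneg _) (blockNorm_nonneg _)) (le_csSup hbdd hr0)
  -- lower bound
  have ge : ‖bdiag Ab‖ ≤ sSup S := by
    rw [Matrix.cstar_norm_def]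
    apply ContinuousLinearMap.opNorm_le_bound _ hc0
    intro y
    set yk : Fin N → Fin M → ℂ := fun k i => y (k, i) with hyk
    have hblk : ∀ k : Fin N,
        ‖((WithLp.equiv 2 _).symm ((Ab k).mulVec (yk k)) : EuclideanSpace ℂ (Fin M))‖ ≤
          sSup S * ‖((WithLp.equiv 2 _).symm (yk k) : EuclideanSpace ℂ (Fin M))‖ := by
      intro k
      by_cases h0 : yk k = 0
      · rw [h0, Matrix.mulVec_zero]
        have : ((WithLp.equiv 2 (Fin M → ℂ)).symm 0 : EuclideanSpace ℂ (Fin M)) = 0 := rfl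
        rw [this, norm_zero]
        positivity
      · have hemb : emb k (yk k) ≠ 0 := by
          obtain ⟨i, hi⟩ := Function.ne_iff.mp h0
          intro h
          apply hi
          have := congrFun h (k, i)
          simpa [emb] using this
        have hmem : blockNorm N M ((bdiag Ab).mulVec (emb k (yk k))) /
            blockNorm N M (emb k (yk k)) ∈ S := ⟨_, hemb, rfl⟩
        have hle := le_csSup hbdd hmem
        rw [mulVec_emb, blockNorm_emb hN, blockNorm_emb hN] at hle
        rwa [div_le_iff₀ (norm_pos_of_ne h0)] at hle
    -- expand norms as square sums
    have hTy : ‖toEuclideanCLM (n := Fin N × Fin M) (𝕜 := ℂ) (bdiag Ab) y‖ ^ 2 =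
        ∑ k : Fin N, ‖((WithLp.equiv 2 _).symm ((Ab k).mulVec (yk k)) :
          EuclideanSpace ℂ (Fin M))‖ ^ 2 := by
      rw [EuclideanSpace.norm_eq, Real.sq_sqrt (Finset.sum_nonneg fun _ _ => by positivity)]
      rw [Fintype.sum_prod_type]
      apply Finset.sum_congr rfl
      intro k _
      rw [EuclideanSpace.norm_eq, Real.sq_sqrt (Finset.sum_nonneg fun _ _ => by positivity)]
      apply Finset.sum_congr rfl
      intro j _
      congr 2
      show (bdiag Ab).mulVec (fun p => y p) (k, j) = _
      rw [mulVec_block]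
      rfl
    have hy : ‖y‖ ^ 2 = ∑ k : Fin N,
        ‖((WithLp.equiv 2 _).symm (yk k) : EuclideanSpace ℂ (Fin M))‖ ^ 2 := by
      rw [EuclideanSpace.norm_eq, Real.sq_sqrt (Finset.sum_nonneg fun _ _ => by positivity)]
      rw [Fintype.sum_prod_type]
      apply Finset.sum_congr rfl
      intro k _
      rw [EuclideanSpace.norm_eq, Real.sq_sqrt (Finset.sum_nonneg fun _ _ => by positivity)]
      rfl
    have hsq : ‖toEuclideanCLM (n := Fin N × Fin M) (𝕜 := ℂ) (bdiag Ab) y‖ ^ 2 ≤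
        (sSup S * ‖y‖) ^ 2 := by
      rw [hTy, mul_pow, hy, Finset.mul_sum]
      apply Finset.sum_le_sum
      intro k _
      rw [← mul_pow]
      exact pow_le_pow_left₀ (norm_nonneg _) (hblk k) 2
    calc ‖toEuclideanCLM (n := Fin N × Fin M) (𝕜 := ℂ) (bdiag Ab) y‖
        = Real.sqrt (‖toEuclideanCLM (n := Fin N × Fin M) (𝕜 := ℂ) (bdiag Ab) y‖ ^ 2) :=
          (Real.sqrt_sq (norm_nonneg _)).symm
      _ ≤ Real.sqrt ((sSup S * ‖y‖) ^ 2) := Real.sqrt_le_sqrt hsq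
      _ = sSup S * ‖y‖ := Real.sqrt_sq (by positivity)
  exact le_antisymm (csSup_le hne ub) ge

end main

lemma bdiag_isHermitian {N M : ℕ} (Ab : Fin N → Matrix (Fin M) (Fin M) ℂ)
    (hAb : ∀ k, (Ab k).IsHermitian) : (bdiag Ab).IsHermitian := by
  ext p q
  obtain ⟨k, i⟩ := p
  obtain ⟨l, j⟩ := q
  simp only [conjTranspose_apply, bdiag, of_apply]
  by_cases h : l = k
  · subst h
    simp only [if_pos rfl]
    exact (hAb l).apply i j
  · rw [if_neg h, if_neg (Ne.symm h), star_zero]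

/-- For a block diagonal Hermitian matrix `A = diag{A_1,...,A_N}` with each `A_k ∈ ℂ^{M×M}`
Hermitian, the induced block maximum norm of `A` equals its spectral radius. -/
theorem inducedBlockNorm_blockDiagonal_hermitian_eq_spectralRadius
    {N M : ℕ} (hN : 0 < N) (hM : 0 < M)
    (Ab : Fin N → Matrix (Fin M) (Fin M) ℂ)
    (hAb : ∀ k, (Ab k).IsHermitian) :
    inducedBlockNorm N M (Matrix.of fun p q => if p.1 = q.1 then Ab p.1 p.2 q.2 else 0) =
      (spectralRadius ℂ
        ((Matrix.of fun p q => if p.1 = q.1 then Ab p.1 p.2 q.2 else 0) :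
          Matrix (Fin N × Fin M) (Fin N × Fin M) ℂ)).toReal := by
  show inducedBlockNorm N M (bdiag Ab) = (spectralRadius ℂ (bdiag Ab)).toReal
  rw [key Ab hN hM]
  have hsa : IsSelfAdjoint (bdiag Ab) := bdiag_isHermitian Ab hAb
  have h2' := @IsSelfAdjoint.spectralRadius_eq_nnnorm
    (Matrix (Fin N × Fin M) (Fin N × Fin M) ℂ) matCStar (bdiag Ab) hsa
  have h2 := congrArg ENNReal.toReal h2'
  simp only [ENNReal.coe_toReal, coe_nnnorm] at h2
  exact h2.symm
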